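/- For each letter γ ∈ {O, H, C, T}, there exists a 2-iterated pushdown automaton with input alphabet {o, h, c, t} that accepts a word u if and only if u = ψ(τ^k(γ)) for some natural number k; these are the level words read on the border of the k-truncated γ-sectors of the dodecagrid, the tiling {5,3,4} of hyperbolic 3-space. -/

import Mathlib

/-- Operations on a 2-level iterated pushdown store. -/
inductive Op (Γ : Type*) where
  | pop1 : Op Γ
  | pop2 : Op Γ
  | push1 : List Γ → Op Γ
  | push2 : List Γ → Op Γ

/-- A 2-level pushdown store: a finite list of entries `(A, s)` with `A` a letter of `Γ`
and `s ∈ Γ*` the inner store of the entry. -/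
abbrev Store (Γ : Type*) := List (Γ × List Γ)

/-- The top symbols of a 2-level store: the letter of the top entry followed by the first
letter of its inner store when that inner store is nonempty; an element of `Γ ∪ Γ²`. -/
def topsym {Γ : Type*} : Store Γ → List Γ
  | [] => []
  | (A, s) :: _ => A :: s.take 1

/-- Apply an operation to a 2-level store (a partial operation):
`pop1` removes the top entry; `pop2` removes the first letter of the inner store of the
top entry (when nonempty); `push1 w` replaces the top entry `(A, s)` by the entries
`(w_1, s), …, (w_m, s)`; `push2 u` replaces the top entry `(A, s)` by `(A, u ++ s)`. -/
def applyOp {Γ : Type*} : Op Γ → Store Γ → Option (Store Γ)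
  | .pop1, _ :: rest => some rest
  | .pop2, (A, _ :: s) :: rest => some ((A, s) :: rest)
  | .push1 w, (_, s) :: rest => some (w.map (fun x => (x, s)) ++ rest)
  | .push2 u, (A, s) :: rest => some ((A, u ++ s) :: rest)
  | _, _ => none

/-- A 2-iterated pushdown automaton with state set `Q`, input alphabet `In` and store
alphabet `Γ`: an initial state `q0`, an initial store symbol `Z`, and a transition table
`δ` assigning to each triple `(q, a, t)` — with `a ∈ In ∪ {ε}` and `t ∈ Γ ∪ Γ²` — a
finite set (list) of instructions `(q', op)`. -/
structure IPDA2 (Q In Γ : Type*) where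
  q0 : Q
  Z : Γ
  δ : Q → Option In → List Γ → List (Q × Op Γ)

/-- A configuration: current state, remaining input word, current 2-level store. -/
abbrev Config (Q In Γ : Type*) := Q × List In × Store Γ

/-- One computation step: an instruction from `δ(q, a, topsym ω)` may be applied, where
`a = ε` (no input consumed) or `a` is the first letter of the remaining input (which is
then consumed); the state changes to `q'` and the operation is applied to the store. -/
inductive IPDA2.Step {Q In Γ : Type*} (M : IPDA2 Q In Γ) :
    Config Q In Γ → Config Q In Γ → Prop
  | eps {q q' : Q} {w : List In} {ω ω' : Store Γ} {op : Op Γ} :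
      (q', op) ∈ M.δ q none (topsym ω) → applyOp op ω = some ω' →
      M.Step (q, w, ω) (q', w, ω')
  | read {q q' : Q} {a : In} {w : List In} {ω ω' : Store Γ} {op : Op Γ} :
      (q', op) ∈ M.δ q (some a) (topsym ω) → applyOp op ω = some ω' →
      M.Step (q, a :: w, ω) (q', w, ω')

/-- A finite sequence of computation steps. -/
def IPDA2.Steps {Q In Γ : Type*} (M : IPDA2 Q In Γ) :
    Config Q In Γ → Config Q In Γ → Prop :=
  Relation.ReflTransGen M.Step

/-- Acceptance: some finite sequence of steps leads from the initial configuration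
`(q0, w, [(Z, ε)])` to a configuration with empty remaining input and empty store. -/
def IPDA2.Accepts {Q In Γ : Type*} (M : IPDA2 Q In Γ) (w : List In) : Prop :=
  ∃ q : Q, M.Steps (M.q0, w, [(M.Z, [])]) (q, [], [])

/-- The four-letter alphabet `{O, H, C, T}` of node labels of the dodecagrid trees. -/
inductive OHCT where
  | O : OHCT
  | H : OHCT
  | C : OHCT
  | T : OHCT
  deriving DecidableEq

/-- The substitution `τ` determined by `τ(O) = O⁵C³T`, `τ(H) = O⁴C³T`, `τ(C) = O³C³T`
and `τ(T) = O²HC²T`, on letters. -/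
def tauLetter : OHCT → List OHCT
  | .O => [.O, .O, .O, .O, .O, .C, .C, .C, .T]
  | .H => [.O, .O, .O, .O, .C, .C, .C, .T]
  | .C => [.O, .O, .O, .C, .C, .C, .T]
  | .T => [.O, .O, .H, .C, .C, .T]

/-- The substitution `τ` extended to words (monoid morphism of words). -/
def tauWord (w : List OHCT) : List OHCT := w.flatMap tauLetter

/-- The four-letter input alphabet `{o, h, c, t}`. -/
inductive ohct where
  | o : ohct
  | h : ohct
  | c : ohct
  | t : ohct
  deriving DecidableEq

/-- The letter renaming `ψ : O ↦ o, H ↦ h, C ↦ c, T ↦ t`. -/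
def psi : OHCT → ohct
  | .O => .o
  | .H => .h
  | .C => .c
  | .T => .t

/- ## Auxiliary development for the proof -/

instance : Fintype OHCT where
  elems := {.O, .H, .C, .T}
  complete := by intro x; cases x <;> simp

namespace DodecaProof

/-- States of the automaton: `p` (counting phase), `q` (main phase),
`e A` (intermediate expansion state remembering the letter `A`). -/
inductive StQ where
  | p : StQ
  | q : StQ
  | e : OHCT → StQ
  deriving DecidableEq, Fintype

/-- Store alphabet: `some A` for a letter, `none` as the unary counter symbol. -/
abbrev G := Option OHCT

/-- The transition table. -/
def delta : StQ → Option ohct → List G → List (StQ × Op G)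
  | .p, none, some _ :: _ => [(.p, .push2 [none]), (.q, .push2 [])]
  | .q, none, [some A, none] => [(.e A, .pop2)]
  | .q, some a, [some A] => if a = psi A then [(.q, .pop1)] else []
  | .e A, none, some B :: _ => if B = A then [(.q, .push1 ((tauLetter A).map some))] else []
  | _, _, _ => []

def M (γ : OHCT) : IPDA2 StQ ohct G := ⟨.p, some γ, delta⟩

/-- Encode an abstract store: entry `(A, j)` becomes `(some A, noneʲ)`. -/
def enc (L : List (OHCT × ℕ)) : Store G :=
  L.map fun x => (some x.1, List.replicate x.2 none)

/-- Value of an abstract store: the word it forces to be read. -/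
def val (L : List (OHCT × ℕ)) : List ohct :=
  L.flatMap fun x => (tauWord^[x.2] [x.1]).map psi

@[simp] lemma enc_nil : enc [] = [] := rfl
@[simp] lemma enc_cons (A j L) : enc ((A, j) :: L) = (some A, List.replicate j none) :: enc L := rfl
@[simp] lemma val_nil : val [] = [] := rfl
@[simp] lemma val_cons (A j L) :
    val ((A, j) :: L) = (tauWord^[j] [A]).map psi ++ val L := rfl
lemma val_append (L₁ L₂) : val (L₁ ++ L₂) = val L₁ ++ val L₂ := by
  simp [val]

lemma tauWord_append (x y : List OHCT) : tauWord (x ++ y) = tauWord x ++ tauWord y := by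
  simp [tauWord]

lemma iter_append (n : ℕ) (x y : List OHCT) :
    tauWord^[n] (x ++ y) = tauWord^[n] x ++ tauWord^[n] y := by
  induction n generalizing x y with
  | zero => simp
  | succ n ih => simp [Function.iterate_succ_apply, tauWord_append, ih]

lemma iter_cons (n : ℕ) (A : OHCT) (w : List OHCT) :
    tauWord^[n] (A :: w) = tauWord^[n] [A] ++ tauWord^[n] w := by
  simpa using iter_append n [A] w

lemma tauWord_single (A : OHCT) : tauWord [A] = tauLetter A := by
  simp [tauWord]

@[simp] lemma tauWord_nil : tauWord [] = [] := rfl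

@[simp] lemma iter_nil (n : ℕ) : tauWord^[n] ([] : List OHCT) = [] := by
  induction n with
  | zero => rfl
  | succ n ih => rw [Function.iterate_succ_apply, tauWord_nil, ih]

lemma iter_succ_letter (n : ℕ) (A : OHCT) :
    tauWord^[n + 1] [A] = tauWord^[n] (tauLetter A) := by
  rw [Function.iterate_succ_apply, tauWord_single]

lemma val_map_const (j : ℕ) (w : List OHCT) :
    val (w.map fun B => (B, j)) = (tauWord^[j] w).map psi := by
  induction w with
  | nil => simp
  | cons A w ih =>
    rw [List.map_cons, val_cons, ih, iter_cons j A w, List.map_append]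

lemma topsym_enc_zero (A : OHCT) (L) :
    topsym (enc ((A, 0) :: L)) = [some A] := rfl

lemma topsym_enc_succ (A : OHCT) (j : ℕ) (L) :
    topsym (enc ((A, j + 1) :: L)) = [some A, none] := by
  simp [topsym, enc, List.replicate_succ]

lemma delta_nil (st : StQ) (a : Option ohct) : delta st a [] = [] := by
  cases st <;> cases a <;> rfl

/-- Completeness core: the main phase correctly generates the word. -/
lemma runs (γ : OHCT) (k : ℕ) : ∀ (w : List OHCT) (v : List ohct) (rest : Store G),
    (M γ).Steps (.q, (tauWord^[k] w).map psi ++ v, enc (w.map fun B => (B, k)) ++ rest)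
      (.q, v, rest) := by
  induction k with
  | zero =>
    intro w
    induction w with
    | nil =>
      intro v rest
      simp only [Function.iterate_zero, id_eq, List.map_nil, List.nil_append, enc_nil]
      exact Relation.ReflTransGen.refl
    | cons A w ih =>
      intro v rest
      refine Relation.ReflTransGen.head ?_ (by simpa [IPDA2.Steps] using ih v rest)
      have hmem : ((StQ.q, Op.pop1 (Γ := G)) ∈
          (M γ).δ .q (some (psi A)) (topsym (enc ((A::w).map fun B => (B, 0)) ++ rest))) := by
        simp [M, topsym, enc, delta]
      have happ : applyOp Op.pop1 (enc ((A::w).map fun B => (B, 0)) ++ rest) =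
          some (enc (w.map fun B => (B, 0)) ++ rest) := rfl
      have := IPDA2.Step.read (M := M γ) (w := (tauWord^[0] w).map psi ++ v) hmem happ
      simpa using this
  | succ k ih =>
    intro w
    induction w with
    | nil =>
      intro v rest
      simp only [List.map_nil, enc_nil, List.nil_append, iter_nil]
      exact Relation.ReflTransGen.refl
    | cons A w ihw =>
      intro v rest
      -- step 1 : q --pop2--> e A
      have h1 : (M γ).Step
          (.q, (tauWord^[k+1] (A::w)).map psi ++ v,
            enc (((A::w)).map fun B => (B, k+1)) ++ rest)
          (.e A, (tauWord^[k+1] (A::w)).map psi ++ v,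
            (some A, List.replicate k none) :: (enc (w.map fun B => (B, k+1)) ++ rest)) := by
      -- topsym is [some A, none]
        refine IPDA2.Step.eps (op := .pop2) ?_ ?_
        · simp [M, delta, topsym, enc, List.replicate_succ]
        · simp [enc, applyOp, List.replicate_succ]
      -- step 2 : e A --push1--> q
      have h2 : (M γ).Step
          (.e A, (tauWord^[k+1] (A::w)).map psi ++ v,
            (some A, List.replicate k none) :: (enc (w.map fun B => (B, k+1)) ++ rest))
          (.q, (tauWord^[k+1] (A::w)).map psi ++ v,
            enc ((tauLetter A).map fun B => (B, k)) ++ (enc (w.map fun B => (B, k+1)) ++ rest)) := by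
        refine IPDA2.Step.eps (op := .push1 ((tauLetter A).map some)) ?_ ?_
        · cases k <;> simp [M, delta, topsym, List.replicate_succ]
        · simp [applyOp, enc, List.map_map, Function.comp]
      refine Relation.ReflTransGen.head h1 (Relation.ReflTransGen.head h2 ?_)
      have hin : (tauWord^[k+1] (A::w)).map psi
          = (tauWord^[k] (tauLetter A)).map psi ++ ((tauWord^[k+1] w).map psi ++ v) → True := fun _ => trivial
      have heq : (tauWord^[k+1] (A::w)).map psi ++ v
          = (tauWord^[k] (tauLetter A)).map psi ++ ((tauWord^[k+1] w).map psi ++ v) := by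
        rw [iter_cons, iter_succ_letter]; simp
      rw [heq]
      exact Relation.ReflTransGen.trans
        (ih (tauLetter A) ((tauWord^[k+1] w).map psi ++ v) (enc (w.map fun B => (B, k+1)) ++ rest))
        (ihw v rest)

lemma pLoop (γ : OHCT) (u : List ohct) (k : ℕ) :
    (M γ).Steps (.p, u, enc [(γ, 0)]) (.p, u, enc [(γ, k)]) := by
  induction k with
  | zero => exact Relation.ReflTransGen.refl
  | succ k ih =>
    refine Relation.ReflTransGen.tail ih ?_
    refine IPDA2.Step.eps (op := .push2 [none]) ?_ ?_
    · cases k <;> simp [M, delta, topsym, enc, List.replicate_succ]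
    · simp [applyOp, enc, List.replicate_succ]

lemma complete (γ : OHCT) (k : ℕ) :
    (M γ).Accepts ((tauWord^[k] [γ]).map psi) := by
  refine ⟨.q, ?_⟩
  have h0 : (M γ).Steps (.p, (tauWord^[k] [γ]).map psi, enc [(γ, 0)])
      (.p, (tauWord^[k] [γ]).map psi, enc [(γ, k)]) := pLoop γ _ k
  have h1 : (M γ).Step (.p, (tauWord^[k] [γ]).map psi, enc [(γ, k)])
      (.q, (tauWord^[k] [γ]).map psi, enc [(γ, k)]) := by
    refine IPDA2.Step.eps (op := .push2 []) ?_ ?_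
    · cases k <;> simp [M, delta, topsym, enc, List.replicate_succ]
    · simp [applyOp, enc]
  have h2 : (M γ).Steps (.q, (tauWord^[k] [γ]).map psi, enc [(γ, k)]) (.q, [], []) := by
    have := runs γ k [γ] [] []
    simpa using this
  show (M γ).Steps (.p, (tauWord^[k] [γ]).map psi, [(some γ, [])]) (.q, [], [])
  exact Relation.ReflTransGen.trans h0 (Relation.ReflTransGen.head h1 h2)

/-- The soundness invariant on configurations. -/
def Pred (c : Config StQ ohct G) : Prop :=
  (∀ L, c.2.2 = enc L → c.1 = .q → c.2.1 = val L) ∧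
  (∀ A L, c.2.2 = enc L → c.1 = .e A → (L = [] ∧ c.2.1 = []) ∨
      ∃ j L', L = (A, j) :: L' ∧ c.2.1 = (tauWord^[j+1] [A]).map psi ++ val L') ∧
  (∀ A j L', c.2.2 = enc ((A, j) :: L') → c.1 = .p → ∃ k, c.2.1 = val ((A, k) :: L'))

lemma sound (γ : OHCT) (qf : StQ) (c : Config StQ ohct G)
    (h : (M γ).Steps c (qf, [], [])) : Pred c := by
  induction h using Relation.ReflTransGen.head_induction_on with
  | refl =>
    refine ⟨?_, ?_, ?_⟩
    · intro L hL _
      have : L = [] := by simpa [enc, List.map_eq_nil_iff] using hL.symm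
      subst this; rfl
    · intro A L hL _
      have : L = [] := by simpa [enc, List.map_eq_nil_iff] using hL.symm
      exact Or.inl ⟨this, rfl⟩
    · intro A j L' hL _
      simp [enc] at hL
  | @head a c' hstep hsteps ih =>
    obtain ⟨st, u, ω⟩ := a
    refine ⟨?_, ?_, ?_⟩
    -- state q
    · rintro L rfl rfl
      match L with
      | [] =>
        cases hstep with
        | eps hmem _ => simp [M, delta_nil, topsym] at hmem
        | read hmem _ => simp [M, delta_nil, topsym] at hmem
      | (A, 0) :: L' =>
        cases hstep with
        | eps hmem _ =>
          rw [topsym_enc_zero] at hmem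
          simp [M, delta] at hmem
        | @read _ q' a w _ ω' op hmem happ =>
          rw [topsym_enc_zero] at hmem
          rw [show (M γ).δ .q (some a) [some A] =
            (if a = psi A then [(.q, .pop1)] else []) from rfl] at hmem
          split_ifs at hmem with hA
          · simp at hmem
            obtain ⟨rfl, rfl⟩ := hmem
            have hω' : ω' = enc L' := by
              simp [applyOp, enc] at happ
              exact happ.symm
            subst hω' hA
            have hw := ih.1 L' rfl rfl
            simp only [val_cons, Function.iterate_zero, id_eq, List.map_cons, List.map_nil]
            simpa using hw
          · simp at hmem
      | (A, j + 1) :: L' =>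
        cases hstep with
        | read hmem _ =>
          rw [topsym_enc_succ] at hmem
          simp [M, delta] at hmem
        | @eps _ q' _ _ ω' op hmem happ =>
          rw [topsym_enc_succ] at hmem
          rw [show (M γ).δ .q none [some A, none] = [(.e A, .pop2)] from rfl] at hmem
          simp at hmem
          obtain ⟨rfl, rfl⟩ := hmem
          have hω' : ω' = enc ((A, j) :: L') := by
            rw [enc_cons, List.replicate_succ] at happ
            simp [applyOp] at happ
            simp [happ.symm]
          subst hω'
          rcases ih.2.1 A ((A, j) :: L') rfl rfl with ⟨hfalse, _⟩ | ⟨j₀, L₀, hEq, hu⟩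
          · exact absurd hfalse (by simp)
          · obtain ⟨rfl, rfl⟩ : j = j₀ ∧ L' = L₀ := by
              constructor <;> [exact (Prod.mk.injEq .. ▸ (List.cons.injEq .. ▸ hEq).1).2;
                exact (List.cons.injEq .. ▸ hEq).2]
            simpa using hu
    -- state e A
    · rintro A L rfl rfl
      match L with
      | [] =>
        cases hstep with
        | eps hmem _ => simp [M, delta_nil, topsym] at hmem
        | read hmem _ => simp [M, delta_nil, topsym] at hmem
      | (A₀, j) :: L' =>
        cases hstep with
        | read hmem _ =>
          have ht : ∃ r, topsym (enc ((A₀, j) :: L')) = some A₀ :: r := by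
            cases j
            · exact ⟨[], topsym_enc_zero A₀ L'⟩
            · exact ⟨[none], topsym_enc_succ A₀ _ L'⟩
          obtain ⟨r, hr⟩ := ht
          rw [hr] at hmem
          simp [M, delta] at hmem
        | @eps _ q' _ _ ω' op hmem happ =>
          have ht : ∃ r, topsym (enc ((A₀, j) :: L')) = some A₀ :: r := by
            cases j
            · exact ⟨[], topsym_enc_zero A₀ L'⟩
            · exact ⟨[none], topsym_enc_succ A₀ _ L'⟩
          obtain ⟨r, hr⟩ := ht
          rw [hr] at hmem
          rw [show (M γ).δ (.e A) none (some A₀ :: r) =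
            (if A₀ = A then [(.q, .push1 ((tauLetter A).map some))] else []) from rfl] at hmem
          split_ifs at hmem with hA
          · subst hA
            simp at hmem
            obtain ⟨rfl, rfl⟩ := hmem
            have hω' : ω' = enc ((tauLetter A₀).map (fun B => (B, j)) ++ L') := by
              simp [applyOp, enc] at happ
              rw [← happ]
              simp [enc, List.map_map, Function.comp]
            subst hω'
            have hu := ih.1 ((tauLetter A₀).map (fun B => (B, j)) ++ L') rfl rfl
            refine Or.inr ⟨j, L', rfl, ?_⟩
            rw [hu, val_append, val_map_const, iter_succ_letter]
          · simp at hmem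
    -- state p
    · rintro A j L' rfl rfl
      cases hstep with
      | read hmem _ =>
        have ht : ∃ r, topsym (enc ((A, j) :: L')) = some A :: r := by
          cases j
          · exact ⟨[], topsym_enc_zero A L'⟩
          · exact ⟨[none], topsym_enc_succ A _ L'⟩
        obtain ⟨r, hr⟩ := ht
        rw [hr] at hmem
        simp [M, delta] at hmem
      | @eps _ q' _ _ ω' op hmem happ =>
        have ht : ∃ r, topsym (enc ((A, j) :: L')) = some A :: r := by
          cases j
          · exact ⟨[], topsym_enc_zero A L'⟩
          · exact ⟨[none], topsym_enc_succ A _ L'⟩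
        obtain ⟨r, hr⟩ := ht
        rw [hr] at hmem
        rw [show (M γ).δ .p none (some A :: r) =
          [(.p, .push2 [none]), (.q, .push2 [])] from rfl] at hmem
        simp at hmem
        rcases hmem with ⟨rfl, rfl⟩ | ⟨rfl, rfl⟩
        · have hω' : ω' = enc ((A, j + 1) :: L') := by
            simp [applyOp, enc] at happ
            rw [← happ]
            simp [enc, List.replicate_succ]
          subst hω'
          exact ih.2.2 A (j + 1) L' rfl rfl
        · have hω' : ω' = enc ((A, j) :: L') := by
            simp [applyOp, enc] at happ
            rw [← happ]; rfl
          subst hω'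
          exact ⟨j, ih.1 ((A, j) :: L') rfl rfl⟩

end DodecaProof


/-- For each letter `γ ∈ {O, H, C, T}`, there exists a 2-iterated pushdown automaton
with input alphabet `{o, h, c, t}` that accepts a word `u` if and only if
`u = ψ(τ^k(γ))` for some `k : ℕ` — the level words read on the border of the
`k`-truncated `γ`-sectors of the dodecagrid, the tiling `{5,3,4}` of hyperbolic
3-space. -/
theorem exists_ipda2_dodecagrid_sector_words (γ : OHCT) :
    ∃ (Q Γ : Type) (_ : Fintype Q) (_ : Fintype Γ) (M : IPDA2 Q ohct Γ),
      ∀ u : List ohct,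
        M.Accepts u ↔ ∃ k : ℕ, u = (tauWord^[k] [γ]).map psi := by
  refine ⟨DodecaProof.StQ, DodecaProof.G, inferInstance, inferInstance, DodecaProof.M γ,
    fun u => ⟨?_, ?_⟩⟩
  · rintro ⟨qf, h⟩
    obtain ⟨k, hk⟩ := (DodecaProof.sound γ qf _ h).2.2 γ 0 [] rfl rfl
    exact ⟨k, by simpa using hk⟩
  · rintro ⟨k, rfl⟩
    exact DodecaProof.complete γ k
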